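/- Let E = EuclideanSpace ℝ (Fin m) and let J : E → ℝ be differentiable with gradient ∇J satisfying ‖∇J(u) − ∇J(v)‖ ≤ K₁‖u − v‖ for all u, v (so in particular J(w₁+w₂) ≤ J(w₁) + ⟪∇J(w₁), w₂⟫ + (K₁/2)‖w₂‖²). Fix t ≥ 1, constants A > 0 and ρ ∈ (0,1), coefficients α_i ∈ [0,1] for i ∈ {1,…,k}, vectors s_i^τ ∈ E for 1 ≤ τ ≤ t, and vectors W_i^{t+1}, 𝒲^t, 𝒲^{t+1} ∈ E with 𝒲^{t+1} = 𝒲^t + (1/t) Σ_{i=1}^k α_i s_i^t. Define b^τ = Σ_{i=1}^k ‖s_i^τ‖ and G^t = −Σ_{i=1}^k α_i ⟪∇J(W_i^{t+1}), s_i^t⟫, and suppose ‖𝒲^{t+1} − W_i^{t+1}‖ ≤ A Σ_{τ=1}^{t} (1/τ) ρ^{t−τ} b^τ for every i. Then J(𝒲^{t+1}) ≤ J(𝒲^t) − (1/t) G^t + A₃ Σ_{τ=1}^{t} ρ^{t−τ} (b^τ)²/τ², where A₃ = K₁A/(1−ρ) + K₁/2. -/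

import Mathlib

open RealInnerProductSpace


lemma descent_lemma {m : ℕ} (J : EuclideanSpace ℝ (Fin m) → ℝ)
    (gradJ : EuclideanSpace ℝ (Fin m) → EuclideanSpace ℝ (Fin m))
    (K : ℝ) (hK : 0 ≤ K)
    (hgrad : ∀ x, HasGradientAt J (gradJ x) x)
    (hLip : ∀ u v, ‖gradJ u - gradJ v‖ ≤ K * ‖u - v‖)
    (x d : EuclideanSpace ℝ (Fin m)) :
    J (x + d) ≤ J x + ⟪gradJ (x + d), d⟫ + K / 2 * ‖d‖ ^ 2 := by
  set g' : ℝ → ℝ := fun θ => ⟪gradJ (x + θ • d), d⟫ with hg'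
  have hγ : ∀ θ : ℝ, HasDerivAt (fun θ : ℝ => x + θ • d) d θ := fun θ => by
    simpa using ((hasDerivAt_id θ).smul_const d).const_add x
  have hderiv : ∀ θ : ℝ, HasDerivAt (fun θ : ℝ => J (x + θ • d)) (g' θ) θ := by
    intro θ
    have h1 := (hasGradientAt_iff_hasFDerivAt.1 (hgrad (x + θ • d)))
    have := h1.comp_hasDerivAt θ (hγ θ)
    simpa [InnerProductSpace.toDual_apply_apply, Function.comp_def] using this
  have hcont : Continuous g' := by
    have hg : Continuous gradJ := by
      rcases eq_or_lt_of_le hK with h | h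
      · have : ∀ u v, gradJ u = gradJ v := by
          intro u v
          have := hLip u v
          rw [← h] at this
          simpa [norm_le_zero_iff, sub_eq_zero] using this
        exact continuous_const.congr fun u => (this x u)
      · have : LipschitzWith ⟨K, hK⟩ gradJ := by
          apply LipschitzWith.of_dist_le_mul
          intro u v
          rw [dist_eq_norm, dist_eq_norm]; exact hLip u v
        exact this.continuous
    exact (hg.comp (by continuity)).inner continuous_const
  have hint : IntervalIntegrable g' MeasureTheory.volume 0 1 :=
    hcont.intervalIntegrable 0 1
  have hFTC : ∫ θ in (0:ℝ)..1, g' θ = J (x + (1:ℝ) • d) - J (x + (0:ℝ) • d) :=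
    intervalIntegral.integral_eq_sub_of_hasDerivAt (fun θ _ => hderiv θ) hint
  have hbound : ∀ θ ∈ Set.Icc (0:ℝ) 1,
      g' θ ≤ ⟪gradJ (x + d), d⟫ + K * (1 - θ) * ‖d‖ ^ 2 := by
    intro θ hθ
    have h1 : g' θ - ⟪gradJ (x + d), d⟫ = ⟪gradJ (x + θ • d) - gradJ (x + d), d⟫ := by
      rw [inner_sub_left]
    have h2 : ⟪gradJ (x + θ • d) - gradJ (x + d), d⟫ ≤
        ‖gradJ (x + θ • d) - gradJ (x + d)‖ * ‖d‖ := real_inner_le_norm _ _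
    have h3 : ‖gradJ (x + θ • d) - gradJ (x + d)‖ ≤ K * ((1 - θ) * ‖d‖) := by
      have := hLip (x + θ • d) (x + d)
      have he : x + θ • d - (x + d) = (θ - 1) • d := by
        rw [sub_smul]; module
      rw [he, norm_smul] at this
      have : ‖gradJ (x + θ • d) - gradJ (x + d)‖ ≤ K * (|θ - 1| * ‖d‖) := by
        simpa using this
      have habs : |θ - 1| = 1 - θ := by
        rw [abs_of_nonpos (by linarith [hθ.2])]; ring
      rwa [habs] at this
    nlinarith [norm_nonneg d, norm_nonneg (gradJ (x + θ • d) - gradJ (x + d))]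
  have hrhs : ∫ θ in (0:ℝ)..1, (⟪gradJ (x + d), d⟫ + K * (1 - θ) * ‖d‖ ^ 2)
      = ⟪gradJ (x + d), d⟫ + K / 2 * ‖d‖ ^ 2 := by
    have h1 : ∫ θ in (0:ℝ)..1, (⟪gradJ (x + d), d⟫ + K * (1 - θ) * ‖d‖ ^ 2)
        = ∫ θ in (0:ℝ)..1, ((⟪gradJ (x + d), d⟫ + K * ‖d‖ ^ 2) + (- (K * ‖d‖ ^ 2)) * θ) := by
      congr 1; ext θ; ring
    rw [h1, intervalIntegral.integral_add (intervalIntegrable_const)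
      (show IntervalIntegrable (fun θ : ℝ => -(K * ‖d‖ ^ 2) * θ) MeasureTheory.volume 0 1 from
        (continuous_const.mul continuous_id').intervalIntegrable 0 1),
      intervalIntegral.integral_const_mul, integral_id,
      intervalIntegral.integral_const]
    simp only [one_smul, smul_eq_mul]
    ring
  have hmono : ∫ θ in (0:ℝ)..1, g' θ ≤
      ∫ θ in (0:ℝ)..1, (⟪gradJ (x + d), d⟫ + K * (1 - θ) * ‖d‖ ^ 2) := by
    apply intervalIntegral.integral_mono_on (by norm_num) hint
      ((continuous_const.add ((continuous_const.mul (continuous_const.sub continuous_id)).mul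
        continuous_const)).intervalIntegrable 0 1)
    exact hbound
  rw [hFTC] at hmono
  rw [hrhs] at hmono
  simp only [one_smul, zero_smul, add_zero] at hmono
  linarith


set_option maxHeartbeats 1000000 in
theorem one_step_descent_inequality
    {m : ℕ} (J : EuclideanSpace ℝ (Fin m) → ℝ)
    (gradJ : EuclideanSpace ℝ (Fin m) → EuclideanSpace ℝ (Fin m))
    (K₁ : ℝ) (hK₁ : 0 ≤ K₁)
    (hgrad : ∀ x, HasGradientAt J (gradJ x) x)
    (hLip : ∀ u v, ‖gradJ u - gradJ v‖ ≤ K₁ * ‖u - v‖)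
    (k t : ℕ) (ht : 1 ≤ t)
    (A ρ : ℝ) (hA : 0 < A) (hρ : ρ ∈ Set.Ioo (0 : ℝ) 1)
    (α : Fin k → ℝ) (hα : ∀ i, α i ∈ Set.Icc (0 : ℝ) 1)
    (s : ℕ → Fin k → EuclideanSpace ℝ (Fin m))
    (W : Fin k → EuclideanSpace ℝ (Fin m))  -- the local iterates `W i^{t+1}`
    (Wb Wb' : EuclideanSpace ℝ (Fin m))     -- `𝒲^t` and `𝒲^{t+1}`
    (hWb' : Wb' = Wb + ((1 : ℝ) / (t : ℝ)) • ∑ i, α i • s t i)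
    (b : ℕ → ℝ) (hb : ∀ τ, b τ = ∑ i, ‖s τ i‖)
    (G : ℝ) (hG : G = -∑ i, α i * ⟪gradJ (W i), s t i⟫)
    (hdis : ∀ i, ‖Wb' - W i‖ ≤
      A * ∑ τ ∈ Finset.Icc 1 t, (1 / (τ : ℝ)) * ρ ^ (t - τ) * b τ) :
    J Wb' ≤ J Wb - (1 / (t : ℝ)) * G +
      (K₁ * A / (1 - ρ) + K₁ / 2) *
        ∑ τ ∈ Finset.Icc 1 t, ρ ^ (t - τ) * (b τ) ^ 2 / (τ : ℝ) ^ 2 := by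
  obtain ⟨hρ0, hρ1⟩ := hρ
  have h1ρ : (0:ℝ) < 1 - ρ := by linarith
  have ht0 : (0:ℝ) < (t:ℝ) := by exact_mod_cast Nat.lt_of_lt_of_le Nat.zero_lt_one ht
  have hbnn : ∀ τ, 0 ≤ b τ := fun τ => by
    rw [hb]; exact Finset.sum_nonneg fun i _ => norm_nonneg _
  set d : EuclideanSpace ℝ (Fin m) := ((1 : ℝ) / (t : ℝ)) • ∑ i, α i • s t i with hd
  set S : ℝ := ∑ τ ∈ Finset.Icc 1 t, (1 / (τ : ℝ)) * ρ ^ (t - τ) * b τ with hS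
  set T : ℝ := ∑ τ ∈ Finset.Icc 1 t, ρ ^ (t - τ) * (b τ) ^ 2 / (τ : ℝ) ^ 2 with hT
  set β : ℝ := b t / (t : ℝ) with hβ
  have hβnn : 0 ≤ β := div_nonneg (hbnn t) ht0.le
  have hSnn : 0 ≤ S := Finset.sum_nonneg fun τ _ => by
    have := hbnn τ
    have : (0:ℝ) ≤ ρ ^ (t - τ) := pow_nonneg hρ0.le _
    positivity
  have hTtermnn : ∀ τ ∈ Finset.Icc 1 t, (0:ℝ) ≤ ρ ^ (t - τ) * (b τ) ^ 2 / (τ : ℝ) ^ 2 :=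
    fun τ _ => by positivity
  have hTnn : 0 ≤ T := Finset.sum_nonneg hTtermnn
  have hβT : β ^ 2 ≤ T := by
    have hmem : t ∈ Finset.Icc 1 t := Finset.mem_Icc.2 ⟨ht, le_refl t⟩
    have := Finset.single_le_sum hTtermnn hmem
    rw [hT]
    calc β ^ 2 = ρ ^ (t - t) * (b t) ^ 2 / (t : ℝ) ^ 2 := by
          rw [Nat.sub_self, pow_zero, one_mul, hβ, div_pow]
      _ ≤ _ := this
  -- geometric sum bound
  have hgeo : ∑ τ ∈ Finset.Icc 1 t, ρ ^ (t - τ) ≤ 1 / (1 - ρ) := by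
    have hre : ∑ τ ∈ Finset.Icc 1 t, ρ ^ (t - τ) = ∑ j ∈ Finset.range t, ρ ^ j := by
      refine Finset.sum_nbij' (fun τ => t - τ) (fun j => t - j) ?_ ?_ ?_ ?_ ?_
      · intro a ha; simp only [Finset.mem_Icc] at ha; simp only [Finset.mem_range]; omega
      · intro a ha; simp only [Finset.mem_range] at ha; simp only [Finset.mem_Icc]; omega
      · intro a ha; simp only [Finset.mem_Icc] at ha; show t - (t - a) = a; omega
      · intro a ha; simp only [Finset.mem_range] at ha; show t - (t - a) = a; omega
      · intro a _; rfl
    rw [hre, le_div_iff₀ h1ρ, geom_sum_eq (ne_of_lt hρ1)]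
    have hρt : (0:ℝ) ≤ ρ ^ t := pow_nonneg hρ0.le t
    have hne : ρ - 1 ≠ 0 := by linarith
    have hq : (ρ ^ t - 1) / (ρ - 1) * (1 - ρ) = 1 - ρ ^ t := by
      field_simp
      ring
    rw [hq]
    linarith
  -- norm of the step
  have hdlen : ‖d‖ ≤ β := by
    rw [hd, norm_smul, hβ]
    have h1 : ‖((1:ℝ)/(t:ℝ))‖ = 1/(t:ℝ) := by
      rw [Real.norm_eq_abs, abs_of_pos (by positivity)]
    rw [h1]
    have h2 : ‖∑ i, α i • s t i‖ ≤ b t := by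
      refine le_trans (norm_sum_le _ _) ?_
      rw [hb]
      refine Finset.sum_le_sum fun i _ => ?_
      rw [norm_smul, Real.norm_eq_abs, abs_of_nonneg (hα i).1]
      exact mul_le_of_le_one_left (norm_nonneg _) (hα i).2
    calc 1/(t:ℝ) * ‖∑ i, α i • s t i‖ ≤ 1/(t:ℝ) * b t :=
          mul_le_mul_of_nonneg_left h2 (by positivity)
      _ = b t / (t:ℝ) := by ring
  -- descent lemma
  have hdesc : J Wb' ≤ J Wb + ⟪gradJ Wb', d⟫ + K₁ / 2 * ‖d‖ ^ 2 := by
    have := descent_lemma J gradJ K₁ hK₁ hgrad hLip Wb d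
    rw [hWb']
    exact this
  -- expand the inner product
  have hIP : ⟪gradJ Wb', d⟫ = (1/(t:ℝ)) * ∑ i, α i * ⟪gradJ Wb', s t i⟫ := by
    rw [hd, real_inner_smul_right, inner_sum]
    congr 1
    exact Finset.sum_congr rfl fun i _ => real_inner_smul_right _ _ _
  set R : ℝ := ∑ i, α i * ⟪gradJ Wb' - gradJ (W i), s t i⟫ with hR
  have hsum : ∑ i, α i * ⟪gradJ Wb', s t i⟫ = -G + R := by
    rw [hG, neg_neg, hR, ← Finset.sum_add_distrib]
    exact Finset.sum_congr rfl fun i _ => by rw [inner_sub_left]; ring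
  -- bound R
  have hRb : R ≤ K₁ * (A * S) * b t := by
    rw [hR, hb, Finset.mul_sum]
    refine Finset.sum_le_sum fun i _ => ?_
    have hc : (0:ℝ) ≤ K₁ * (A * S) * ‖s t i‖ := by positivity
    have h1 : ⟪gradJ Wb' - gradJ (W i), s t i⟫ ≤ K₁ * (A * S) * ‖s t i‖ := by
      calc ⟪gradJ Wb' - gradJ (W i), s t i⟫
          ≤ ‖gradJ Wb' - gradJ (W i)‖ * ‖s t i‖ := real_inner_le_norm _ _
        _ ≤ (K₁ * ‖Wb' - W i‖) * ‖s t i‖ :=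
            mul_le_mul_of_nonneg_right (hLip _ _) (norm_nonneg _)
        _ ≤ (K₁ * (A * S)) * ‖s t i‖ := by
            refine mul_le_mul_of_nonneg_right ?_ (norm_nonneg _)
            exact mul_le_mul_of_nonneg_left (hdis i) hK₁
        _ = K₁ * (A * S) * ‖s t i‖ := by ring
    calc α i * ⟪gradJ Wb' - gradJ (W i), s t i⟫
        ≤ α i * (K₁ * (A * S) * ‖s t i‖) := mul_le_mul_of_nonneg_left h1 (hα i).1
      _ ≤ 1 * (K₁ * (A * S) * ‖s t i‖) := mul_le_mul_of_nonneg_right (hα i).2 hc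
      _ = K₁ * (A * S) * ‖s t i‖ := one_mul _
  -- cross-term bound
  have hcross : S * β ≤ T / 2 + (1 / (1 - ρ)) * (β ^ 2 / 2) := by
    have h1 : S * β = ∑ τ ∈ Finset.Icc 1 t, (1 / (τ : ℝ)) * ρ ^ (t - τ) * b τ * β := by
      rw [hS, Finset.sum_mul]
    have h2 : ∀ τ ∈ Finset.Icc 1 t,
        (1 / (τ : ℝ)) * ρ ^ (t - τ) * b τ * β ≤
          ρ ^ (t - τ) * (b τ) ^ 2 / (τ : ℝ) ^ 2 / 2 + ρ ^ (t - τ) * (β ^ 2 / 2) := by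
      intro τ hτ
      have hτ1 : 1 ≤ τ := (Finset.mem_Icc.1 hτ).1
      have hτ0 : (0:ℝ) < (τ:ℝ) := by exact_mod_cast Nat.lt_of_lt_of_le Nat.zero_lt_one hτ1
      have he : (0:ℝ) ≤ ρ ^ (t - τ) := pow_nonneg hρ0.le _
      have hAM : (b τ / (τ:ℝ)) * β ≤ (b τ / (τ:ℝ)) ^ 2 / 2 + β ^ 2 / 2 := by
        nlinarith [sq_nonneg (b τ / (τ:ℝ) - β)]
      calc (1 / (τ : ℝ)) * ρ ^ (t - τ) * b τ * β
          = ρ ^ (t - τ) * ((b τ / (τ:ℝ)) * β) := by ring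
        _ ≤ ρ ^ (t - τ) * ((b τ / (τ:ℝ)) ^ 2 / 2 + β ^ 2 / 2) :=
            mul_le_mul_of_nonneg_left hAM he
        _ = ρ ^ (t - τ) * (b τ) ^ 2 / (τ : ℝ) ^ 2 / 2 + ρ ^ (t - τ) * (β ^ 2 / 2) := by
            field_simp
    have h3 := Finset.sum_le_sum h2
    rw [← h1] at h3
    refine le_trans h3 ?_
    rw [Finset.sum_add_distrib, ← Finset.sum_div, ← Finset.sum_mul]
    have h4 : (∑ τ ∈ Finset.Icc 1 t, ρ ^ (t - τ)) * (β ^ 2 / 2) ≤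
        (1 / (1 - ρ)) * (β ^ 2 / 2) :=
      mul_le_mul_of_nonneg_right hgeo (by positivity)
    rw [hT]
    linarith
  -- assemble
  have hfin1 : (1/(t:ℝ)) * R ≤ K₁ * A / (1 - ρ) * T := by
    have e1 : (1/(t:ℝ)) * R ≤ (1/(t:ℝ)) * (K₁ * (A * S) * b t) :=
      mul_le_mul_of_nonneg_left hRb (by positivity)
    have e2 : (1/(t:ℝ)) * (K₁ * (A * S) * b t) = (K₁ * A) * (S * β) := by
      rw [hβ]; field_simp
    have e3 : (K₁ * A) * (S * β) ≤ (K₁ * A) * (T / 2 + (1 / (1 - ρ)) * (β ^ 2 / 2)) :=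
      mul_le_mul_of_nonneg_left hcross (by positivity)
    have e4 : (1 / (1 - ρ)) * (β ^ 2 / 2) ≤ (1 / (1 - ρ)) * (T / 2) :=
      mul_le_mul_of_nonneg_left (by linarith) (by positivity)
    have e5 : (K₁ * A) * (T / 2 + (1 / (1 - ρ)) * (T / 2)) ≤ K₁ * A / (1 - ρ) * T := by
      have hid : K₁ * A / (1 - ρ) * T - (K₁ * A) * (T / 2 + (1 / (1 - ρ)) * (T / 2)) =
          (K₁ * A * T) * (ρ / (2 * (1 - ρ))) := by
        field_simp; ring
      have hnn : (0:ℝ) ≤ (K₁ * A * T) * (ρ / (2 * (1 - ρ))) := by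
        have : (0:ℝ) ≤ K₁ * A * T := mul_nonneg (mul_nonneg hK₁ hA.le) hTnn
        have : (0:ℝ) ≤ ρ / (2 * (1 - ρ)) := by positivity
        positivity
      linarith
    have e6 : (K₁ * A) * (T / 2 + (1 / (1 - ρ)) * (β ^ 2 / 2)) ≤
        (K₁ * A) * (T / 2 + (1 / (1 - ρ)) * (T / 2)) :=
      mul_le_mul_of_nonneg_left (by linarith) (by positivity)
    linarith
  have hfin2 : K₁ / 2 * ‖d‖ ^ 2 ≤ K₁ / 2 * T := by
    have h1 : ‖d‖ ^ 2 ≤ β ^ 2 := pow_le_pow_left₀ (norm_nonneg d) hdlen 2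
    have := le_trans h1 hβT
    exact mul_le_mul_of_nonneg_left this (by positivity)
  have hIPval : ⟪gradJ Wb', d⟫ = -((1/(t:ℝ)) * G) + (1/(t:ℝ)) * R := by
    rw [hIP, hsum]; ring
  have hexp : (K₁ * A / (1 - ρ) + K₁ / 2) * T = K₁ * A / (1 - ρ) * T + K₁ / 2 * T := by ring
  linarith [hdesc, hfin1, hfin2]
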